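/- Fix a, b₁, b₂, c₁, c₂ ∈ ℂ with c₁, c₂ not equal to any nonpositive integer, positive integers k₁, k₂, and x, y ∈ ℂ, and for nonnegative integers τ₁, τ₂ set F(τ₁,τ₂) = 𝓕₂⁽¹⁾(a,b₁,b₂;c₁,c₂;τ₁,τ₂,k₁,k₂,x,y). Let Θ_{t₁} and Θ_{t₂} denote the operators acting on the first, respectively second, discrete variable by (Θ_t f)(t) = t(f(t) − f(t−1)). Then for all integers t₁ ≥ 1 and t₂ ≥ k₂ + 2, [Θ_{t₂}((1/k₂)Θ_{t₂} + c₂ − 1)F](t₁,t₂) = k₂(−1)^{k₂}(−t₂)_{k₂}·y·[((1/k₁)Θ_{t₁} + (1/k₂)Θ_{t₂} + a)((1/k₂)Θ_{t₂} + b₂)F](t₁, t₂−k₂), where Pochhammer (−t₂)_{k₂} is taken at the unshifted value t₂. -/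

import Mathlib

open Complex Finset

/-- Ascending Pochhammer symbol `(z)_j = z (z+1) ⋯ (z+j−1)`, with `(z)_0 = 1`. -/
noncomputable def poch (z : ℂ) (j : ℕ) : ℂ := (ascPochhammer ℂ j).eval z

lemma poch_zero (z : ℂ) : poch z 0 = 1 := by simp [poch]

lemma poch_succ (z : ℂ) (j : ℕ) : poch z (j+1) = poch z j * (z + j) := by
  simp [poch, ascPochhammer_succ_eval]

lemma poch_add (z : ℂ) (i j : ℕ) : poch z (i+j) = poch z i * poch (z+i) j := by
  induction j with
  | zero => simp [poch_zero]
  | succ j ih =>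
    rw [← add_assoc, poch_succ, ih, poch_succ]
    push_cast
    ring

lemma poch_one (z : ℂ) : poch z 1 = z := by simp [poch]

lemma poch_prod (z : ℂ) (j : ℕ) : poch z j = ∏ i ∈ Finset.range j, (z + i) := by
  induction j with
  | zero => simp [poch_zero]
  | succ j ih => rw [poch_succ, ih, Finset.prod_range_succ]

lemma poch_nat_zero {t j : ℕ} (h : t < j) : poch (-(t:ℂ)) j = 0 := by
  rw [poch_prod]
  apply Finset.prod_eq_zero (Finset.mem_range.mpr h)
  simp

lemma poch_ne_zero {c : ℂ} (hc : ∀ n : ℕ, c ≠ -(n : ℂ)) (j : ℕ) : poch c j ≠ 0 := by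
  rw [poch_prod]
  apply Finset.prod_ne_zero_iff.mpr
  intro i _ h
  exact hc i (by linear_combination h)

lemma poch_eigen (u : ℂ) (j : ℕ) : (-u) * (poch u j - poch (u+1) j) = j * poch u j := by
  cases j with
  | zero => simp [poch_zero]
  | succ j =>
    have h1 : poch u (j+1) = u * poch (u+1) j := by
      rw [show j + 1 = 1 + j from add_comm _ _, poch_add, poch_one]; norm_num
    have h2 : poch (u+1) (j+1) = poch (u+1) j * (u + 1 + j) := poch_succ _ _
    rw [h1, h2]
    push_cast
    ring

/-- The general summand of `F2one`. -/
noncomputable def Tm (a b₁ b₂ c₁ c₂ : ℂ) (k₁ k₂ : ℕ) (x y : ℂ) (τ₁ τ₂ m n : ℕ) : ℂ :=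
  poch a (m + n) * poch b₁ m * poch b₂ n * (-1 : ℂ) ^ (m * k₁) * poch (-(τ₁ : ℂ)) (m * k₁)
      * (-1 : ℂ) ^ (n * k₂) * poch (-(τ₂ : ℂ)) (n * k₂) * x ^ m * y ^ n
    / (poch c₁ m * poch c₂ n * (Nat.factorial m : ℂ) * (Nat.factorial n : ℂ))

lemma Tm_eigen2 (a b₁ b₂ c₁ c₂ : ℂ) (k₁ k₂ : ℕ) (x y : ℂ) (τ₁ τ₂ m n : ℕ) (h : 1 ≤ τ₂) :
    (τ₂ : ℂ) * (Tm a b₁ b₂ c₁ c₂ k₁ k₂ x y τ₁ τ₂ m n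
        - Tm a b₁ b₂ c₁ c₂ k₁ k₂ x y τ₁ (τ₂ - 1) m n)
      = ((n * k₂ : ℕ) : ℂ) * Tm a b₁ b₂ c₁ c₂ k₁ k₂ x y τ₁ τ₂ m n := by
  have hc : -(((τ₂ - 1 : ℕ) : ℂ)) = -(τ₂ : ℂ) + 1 := by
    rw [Nat.cast_sub h]; push_cast; ring
  have key := poch_eigen (-(τ₂ : ℂ)) (n * k₂)
  rw [neg_neg] at key
  simp only [Tm, hc]
  rw [div_sub_div_same, ← mul_div_assoc, ← mul_div_assoc]
  congr 1
  linear_combination (poch a (m + n) * poch b₁ m * poch b₂ n * (-1 : ℂ) ^ (m * k₁)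
    * poch (-(τ₁ : ℂ)) (m * k₁) * (-1 : ℂ) ^ (n * k₂) * x ^ m * y ^ n) * key

lemma Tm_eigen1 (a b₁ b₂ c₁ c₂ : ℂ) (k₁ k₂ : ℕ) (x y : ℂ) (τ₁ τ₂ m n : ℕ) (h : 1 ≤ τ₁) :
    (τ₁ : ℂ) * (Tm a b₁ b₂ c₁ c₂ k₁ k₂ x y τ₁ τ₂ m n
        - Tm a b₁ b₂ c₁ c₂ k₁ k₂ x y (τ₁ - 1) τ₂ m n)
      = ((m * k₁ : ℕ) : ℂ) * Tm a b₁ b₂ c₁ c₂ k₁ k₂ x y τ₁ τ₂ m n := by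
  have hc : -(((τ₁ - 1 : ℕ) : ℂ)) = -(τ₁ : ℂ) + 1 := by
    rw [Nat.cast_sub h]; push_cast; ring
  have key := poch_eigen (-(τ₁ : ℂ)) (m * k₁)
  rw [neg_neg] at key
  simp only [Tm, hc]
  rw [div_sub_div_same, ← mul_div_assoc, ← mul_div_assoc]
  congr 1
  linear_combination (poch a (m + n) * poch b₁ m * poch b₂ n * (-1 : ℂ) ^ (m * k₁)
    * (-1 : ℂ) ^ (n * k₂) * poch (-(τ₂ : ℂ)) (n * k₂) * x ^ m * y ^ n) * key

/-- The first discrete Appell function `𝓕₂⁽¹⁾(a,b₁,b₂;c₁,c₂;t₁,t₂,k₁,k₂,x,y)`.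
Since `(−t₁)_{m k₁} = 0` once `m k₁ > t₁` and `(−t₂)_{n k₂} = 0` once `n k₂ > t₂`
(for `k₁, k₂ ≥ 1`), the doubly infinite sum reduces to this finite sum. -/
noncomputable def F2one (a b₁ b₂ c₁ c₂ : ℂ) (t₁ t₂ k₁ k₂ : ℕ) (x y : ℂ) : ℂ :=
  ∑ m ∈ Finset.range (t₁ + 1), ∑ n ∈ Finset.range (t₂ + 1),
    poch a (m + n) * poch b₁ m * poch b₂ n * (-1 : ℂ) ^ (m * k₁) * poch (-(t₁ : ℂ)) (m * k₁)
      * (-1 : ℂ) ^ (n * k₂) * poch (-(t₂ : ℂ)) (n * k₂) * x ^ m * y ^ n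
    / (poch c₁ m * poch c₂ n * (Nat.factorial m : ℂ) * (Nat.factorial n : ℂ))


lemma F2one_eq_sum (a b₁ b₂ c₁ c₂ : ℂ) (k₁ k₂ : ℕ) (x y : ℂ)
    (hk₁ : 0 < k₁) (hk₂ : 0 < k₂) (τ₁ τ₂ N : ℕ) (h₁ : τ₁ < N) (h₂ : τ₂ < N) :
    F2one a b₁ b₂ c₁ c₂ τ₁ τ₂ k₁ k₂ x y
      = ∑ m ∈ Finset.range N, ∑ n ∈ Finset.range N, Tm a b₁ b₂ c₁ c₂ k₁ k₂ x y τ₁ τ₂ m n := by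
  have hz2 : ∀ m n : ℕ, τ₂ < n → Tm a b₁ b₂ c₁ c₂ k₁ k₂ x y τ₁ τ₂ m n = 0 := by
    intro m n hn
    have : τ₂ < n * k₂ := lt_of_lt_of_le hn (Nat.le_mul_of_pos_right n hk₂)
    simp [Tm, poch_nat_zero this]
  have hz1 : ∀ m n : ℕ, τ₁ < m → Tm a b₁ b₂ c₁ c₂ k₁ k₂ x y τ₁ τ₂ m n = 0 := by
    intro m n hm
    have : τ₁ < m * k₁ := lt_of_lt_of_le hm (Nat.le_mul_of_pos_right m hk₁)
    simp [Tm, poch_nat_zero this]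
  have step : F2one a b₁ b₂ c₁ c₂ τ₁ τ₂ k₁ k₂ x y
      = ∑ m ∈ Finset.range (τ₁ + 1), ∑ n ∈ Finset.range (τ₂ + 1),
        Tm a b₁ b₂ c₁ c₂ k₁ k₂ x y τ₁ τ₂ m n := rfl
  rw [step]
  rw [Finset.sum_subset (Finset.range_subset_range.mpr h₁)]
  · apply Finset.sum_congr rfl
    intro m _
    apply Finset.sum_subset (Finset.range_subset_range.mpr h₂)
    intro n _ hn
    simp only [Finset.mem_range] at hn
    exact hz2 m n (by omega)
  · intro m _ hm
    simp only [Finset.mem_range] at hm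
    apply Finset.sum_eq_zero
    intro n _
    exact hz1 m n (by omega)
lemma Tm_shift (a b₁ b₂ c₁ c₂ x y : ℂ) (k₁ k₂ : ℕ) (hk₂ : 0 < k₂)
    (hc₁ : ∀ n : ℕ, c₁ ≠ -(n : ℂ)) (hc₂ : ∀ n : ℕ, c₂ ≠ -(n : ℂ))
    (t₁ t₂ m n : ℕ) (h : k₂ ≤ t₂) :
    (((n + 1) * k₂ : ℕ) : ℂ) * (((n + 1 : ℕ) : ℂ) + c₂ - 1)
        * Tm a b₁ b₂ c₁ c₂ k₁ k₂ x y t₁ t₂ m (n + 1)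
      = (k₂ : ℂ) * (-1 : ℂ) ^ k₂ * poch (-(t₂ : ℂ)) k₂ * y *
          (((m : ℂ) + (n : ℂ) + a) * ((n : ℂ) + b₂)
            * Tm a b₁ b₂ c₁ c₂ k₁ k₂ x y t₁ (t₂ - k₂) m n) := by
  have hs : -(((t₂ - k₂ : ℕ) : ℂ)) = -(t₂ : ℂ) + (k₂ : ℂ) := by
    rw [Nat.cast_sub h]; ring
  have hpa : poch a (m + (n + 1)) = poch a (m + n) * (a + ((m + n : ℕ) : ℂ)) := by
    rw [show m + (n + 1) = (m + n) + 1 by ring, poch_succ]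
  have hpb : poch b₂ (n + 1) = poch b₂ n * (b₂ + (n : ℂ)) := poch_succ _ _
  have hpc : poch c₂ (n + 1) = poch c₂ n * (c₂ + (n : ℂ)) := poch_succ _ _
  have hpow : (-1 : ℂ) ^ ((n + 1) * k₂) = (-1 : ℂ) ^ (n * k₂) * (-1 : ℂ) ^ k₂ := by
    rw [show (n + 1) * k₂ = n * k₂ + k₂ by ring, pow_add]
  have hpt : poch (-(t₂ : ℂ)) ((n + 1) * k₂)
      = poch (-(t₂ : ℂ)) k₂ * poch (-(((t₂ - k₂ : ℕ)) : ℂ)) (n * k₂) := by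
    rw [show (n + 1) * k₂ = k₂ + n * k₂ by ring, poch_add, hs]
  have hfac : ((Nat.factorial (n + 1)) : ℂ) = ((n : ℂ) + 1) * (Nat.factorial n : ℂ) := by
    rw [Nat.factorial_succ]; push_cast; ring
  have hy : y ^ (n + 1) = y ^ n * y := pow_succ _ _
  have hc₂n : poch c₂ n ≠ 0 := poch_ne_zero hc₂ n
  have hc₁m : poch c₁ m ≠ 0 := poch_ne_zero hc₁ m
  have hc₂n' : c₂ + (n : ℂ) ≠ 0 := fun hz => hc₂ n (by linear_combination hz)
  have hfm : ((Nat.factorial m : ℂ)) ≠ 0 := Nat.cast_ne_zero.mpr (Nat.factorial_ne_zero m)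
  have hfn : ((Nat.factorial n : ℂ)) ≠ 0 := Nat.cast_ne_zero.mpr (Nat.factorial_ne_zero n)
  have hn1 : ((n : ℂ) + 1) ≠ 0 := Nat.cast_add_one_ne_zero n
  have hD1 : poch c₁ m * poch c₂ (n+1) * (Nat.factorial m : ℂ) * (Nat.factorial (n+1) : ℂ) ≠ 0 := by
    refine mul_ne_zero (mul_ne_zero (mul_ne_zero hc₁m (poch_ne_zero hc₂ (n+1))) hfm) ?_
    exact Nat.cast_ne_zero.mpr (Nat.factorial_ne_zero (n+1))
  have hD2 : poch c₁ m * poch c₂ n * (Nat.factorial m : ℂ) * (Nat.factorial n : ℂ) ≠ 0 :=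
    mul_ne_zero (mul_ne_zero (mul_ne_zero hc₁m hc₂n) hfm) hfn
  simp only [Tm, ← mul_div_assoc]
  rw [div_eq_div_iff hD1 hD2]
  rw [hpa, hpb, hpc, hpow, hpt, hfac, hy]
  push_cast
  ring
/-- `Θ` acting on the first discrete variable: `(Θ_{t₁} g)(t₁,t₂) = t₁ (g(t₁,t₂) − g(t₁−1,t₂))`. -/
noncomputable def Th1 (g : ℕ → ℕ → ℂ) : ℕ → ℕ → ℂ :=
  fun t₁ t₂ => (t₁ : ℂ) * (g t₁ t₂ - g (t₁ - 1) t₂)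

/-- `Θ` acting on the second discrete variable: `(Θ_{t₂} g)(t₁,t₂) = t₂ (g(t₁,t₂) − g(t₁,t₂−1))`. -/
noncomputable def Th2 (g : ℕ → ℕ → ℂ) : ℕ → ℕ → ℂ :=
  fun t₁ t₂ => (t₂ : ℂ) * (g t₁ t₂ - g t₁ (t₂ - 1))

/-- The second difference equation for `𝓕₂⁽¹⁾`:
`[Θ_{t₂}((1/k₂)Θ_{t₂} + c₂ − 1)F](t₁,t₂)
  = k₂(−1)^{k₂}(−t₂)_{k₂} y [((1/k₁)Θ_{t₁} + (1/k₂)Θ_{t₂} + a)((1/k₂)Θ_{t₂} + b₂)F](t₁,t₂−k₂)`,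
for `t₁ ≥ 1`, `t₂ ≥ k₂ + 2`. -/
theorem difference_equation_two (a b₁ b₂ c₁ c₂ x y : ℂ) (k₁ k₂ : ℕ)
    (hk₁ : 0 < k₁) (hk₂ : 0 < k₂)
    (hc₁ : ∀ n : ℕ, c₁ ≠ -(n : ℂ)) (hc₂ : ∀ n : ℕ, c₂ ≠ -(n : ℂ))
    (F : ℕ → ℕ → ℂ)
    (hF : ∀ τ₁ τ₂ : ℕ, F τ₁ τ₂ = F2one a b₁ b₂ c₁ c₂ τ₁ τ₂ k₁ k₂ x y)
    (t₁ t₂ : ℕ) (ht₁ : 1 ≤ t₁) (ht₂ : k₂ + 2 ≤ t₂) :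
    Th2 (fun σ₁ σ₂ => (1 / (k₂ : ℂ)) * Th2 F σ₁ σ₂ + (c₂ - 1) * F σ₁ σ₂) t₁ t₂ =
      (k₂ : ℂ) * (-1 : ℂ) ^ k₂ * poch (-(t₂ : ℂ)) k₂ * y *
        ((1 / (k₁ : ℂ)) *
            Th1 (fun σ₁ σ₂ => (1 / (k₂ : ℂ)) * Th2 F σ₁ σ₂ + b₂ * F σ₁ σ₂) t₁ (t₂ - k₂) +
          (1 / (k₂ : ℂ)) *
            Th2 (fun σ₁ σ₂ => (1 / (k₂ : ℂ)) * Th2 F σ₁ σ₂ + b₂ * F σ₁ σ₂) t₁ (t₂ - k₂) +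
          a * ((1 / (k₂ : ℂ)) * Th2 F t₁ (t₂ - k₂) + b₂ * F t₁ (t₂ - k₂))) := by
  have hk2c : (k₂ : ℂ) ≠ 0 := Nat.cast_ne_zero.mpr hk₂.ne'
  have hk1c : (k₁ : ℂ) ≠ 0 := Nat.cast_ne_zero.mpr hk₁.ne'
  set N := t₁ + t₂ + 1 with hN
  set T : ℕ → ℕ → ℕ → ℕ → ℂ := Tm a b₁ b₂ c₁ c₂ k₁ k₂ x y with hT
  set s := t₂ - k₂ with hs
  -- sum representation of F
  have hS : ∀ σ₁ σ₂ : ℕ, σ₁ < N → σ₂ < N →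
      F σ₁ σ₂ = ∑ m ∈ Finset.range N, ∑ n ∈ Finset.range N, T σ₁ σ₂ m n := by
    intro σ₁ σ₂ h1 h2
    rw [hF, hT]
    exact F2one_eq_sum a b₁ b₂ c₁ c₂ k₁ k₂ x y hk₁ hk₂ σ₁ σ₂ N h1 h2
  -- weighted eigenvalue identities
  have hW2 : ∀ (w : ℕ → ℂ) (σ₁ σ₂ : ℕ), 1 ≤ σ₂ →
      (σ₂ : ℂ) * ((∑ m ∈ Finset.range N, ∑ n ∈ Finset.range N, w n * T σ₁ σ₂ m n)
          - ∑ m ∈ Finset.range N, ∑ n ∈ Finset.range N, w n * T σ₁ (σ₂ - 1) m n)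
        = ∑ m ∈ Finset.range N, ∑ n ∈ Finset.range N,
            ((n * k₂ : ℕ) : ℂ) * w n * T σ₁ σ₂ m n := by
    intro w σ₁ σ₂ h
    rw [← Finset.sum_sub_distrib, Finset.mul_sum]
    refine Finset.sum_congr rfl fun m _ => ?_
    rw [← Finset.sum_sub_distrib, Finset.mul_sum]
    refine Finset.sum_congr rfl fun n _ => ?_
    have key := Tm_eigen2 a b₁ b₂ c₁ c₂ k₁ k₂ x y σ₁ σ₂ m n h
    rw [← hT] at key
    linear_combination w n * key
  have hW1 : ∀ (w : ℕ → ℂ) (σ₁ σ₂ : ℕ), 1 ≤ σ₁ →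
      (σ₁ : ℂ) * ((∑ m ∈ Finset.range N, ∑ n ∈ Finset.range N, w n * T σ₁ σ₂ m n)
          - ∑ m ∈ Finset.range N, ∑ n ∈ Finset.range N, w n * T (σ₁ - 1) σ₂ m n)
        = ∑ m ∈ Finset.range N, ∑ n ∈ Finset.range N,
            ((m * k₁ : ℕ) : ℂ) * w n * T σ₁ σ₂ m n := by
    intro w σ₁ σ₂ h
    rw [← Finset.sum_sub_distrib, Finset.mul_sum]
    refine Finset.sum_congr rfl fun m _ => ?_
    rw [← Finset.sum_sub_distrib, Finset.mul_sum]
    refine Finset.sum_congr rfl fun n _ => ?_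
    have key := Tm_eigen1 a b₁ b₂ c₁ c₂ k₁ k₂ x y σ₁ σ₂ m n h
    rw [← hT] at key
    linear_combination w n * key
  -- Th2 F as a sum
  have hTh2F : ∀ σ₁ σ₂ : ℕ, σ₁ < N → 1 ≤ σ₂ → σ₂ < N →
      Th2 F σ₁ σ₂ = ∑ m ∈ Finset.range N, ∑ n ∈ Finset.range N,
        ((n * k₂ : ℕ) : ℂ) * T σ₁ σ₂ m n := by
    intro σ₁ σ₂ h1 h2 h3
    have key := hW2 (fun _ => 1) σ₁ σ₂ h2
    simp only [one_mul, mul_one] at key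
    show (σ₂ : ℂ) * (F σ₁ σ₂ - F σ₁ (σ₂ - 1)) = _
    rw [hS σ₁ σ₂ h1 h3, hS σ₁ (σ₂ - 1) h1 (by omega)]
    exact key
  -- the sum form of the two auxiliary functions
  have hGsum : ∀ σ₁ σ₂ : ℕ, σ₁ < N → 1 ≤ σ₂ → σ₂ < N →
      (1 / (k₂ : ℂ)) * Th2 F σ₁ σ₂ + (c₂ - 1) * F σ₁ σ₂
        = ∑ m ∈ Finset.range N, ∑ n ∈ Finset.range N,
            ((n : ℂ) + c₂ - 1) * T σ₁ σ₂ m n := by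
    intro σ₁ σ₂ h1 h2 h3
    rw [hTh2F σ₁ σ₂ h1 h2 h3, hS σ₁ σ₂ h1 h3, Finset.mul_sum, Finset.mul_sum,
      ← Finset.sum_add_distrib]
    refine Finset.sum_congr rfl fun m _ => ?_
    rw [Finset.mul_sum, Finset.mul_sum, ← Finset.sum_add_distrib]
    refine Finset.sum_congr rfl fun n _ => ?_
    push_cast
    field_simp
    ring
  have hHsum : ∀ σ₁ σ₂ : ℕ, σ₁ < N → 1 ≤ σ₂ → σ₂ < N →
      (1 / (k₂ : ℂ)) * Th2 F σ₁ σ₂ + b₂ * F σ₁ σ₂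
        = ∑ m ∈ Finset.range N, ∑ n ∈ Finset.range N,
            ((n : ℂ) + b₂) * T σ₁ σ₂ m n := by
    intro σ₁ σ₂ h1 h2 h3
    rw [hTh2F σ₁ σ₂ h1 h2 h3, hS σ₁ σ₂ h1 h3, Finset.mul_sum, Finset.mul_sum,
      ← Finset.sum_add_distrib]
    refine Finset.sum_congr rfl fun m _ => ?_
    rw [Finset.mul_sum, Finset.mul_sum, ← Finset.sum_add_distrib]
    refine Finset.sum_congr rfl fun n _ => ?_
    push_cast
    field_simp
  have ht1N : t₁ < N := by omega
  have ht1N' : t₁ - 1 < N := by omega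
  have ht2N : t₂ < N := by omega
  have hsN : s < N := by omega
  have hs1 : 1 ≤ s := by omega
  have hs1N : s - 1 < N := by omega
  -- left-hand side
  have hL : Th2 (fun σ₁ σ₂ => (1 / (k₂ : ℂ)) * Th2 F σ₁ σ₂ + (c₂ - 1) * F σ₁ σ₂) t₁ t₂
      = ∑ m ∈ Finset.range N, ∑ n ∈ Finset.range N,
          ((n * k₂ : ℕ) : ℂ) * ((n : ℂ) + c₂ - 1) * T t₁ t₂ m n := by
    show (t₂ : ℂ) * (((1 / (k₂ : ℂ)) * Th2 F t₁ t₂ + (c₂ - 1) * F t₁ t₂)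
        - ((1 / (k₂ : ℂ)) * Th2 F t₁ (t₂ - 1) + (c₂ - 1) * F t₁ (t₂ - 1))) = _
    rw [hGsum t₁ t₂ ht1N (by omega) ht2N, hGsum t₁ (t₂ - 1) ht1N (by omega) (by omega)]
    exact hW2 (fun n => (n : ℂ) + c₂ - 1) t₁ t₂ (by omega)
  -- right-hand side pieces
  have hTh1H : Th1 (fun σ₁ σ₂ => (1 / (k₂ : ℂ)) * Th2 F σ₁ σ₂ + b₂ * F σ₁ σ₂) t₁ s
      = ∑ m ∈ Finset.range N, ∑ n ∈ Finset.range N,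
          ((m * k₁ : ℕ) : ℂ) * ((n : ℂ) + b₂) * T t₁ s m n := by
    show (t₁ : ℂ) * (((1 / (k₂ : ℂ)) * Th2 F t₁ s + b₂ * F t₁ s)
        - ((1 / (k₂ : ℂ)) * Th2 F (t₁ - 1) s + b₂ * F (t₁ - 1) s)) = _
    rw [hHsum t₁ s ht1N hs1 hsN, hHsum (t₁ - 1) s ht1N' hs1 hsN]
    exact hW1 (fun n => (n : ℂ) + b₂) t₁ s ht₁
  have hTh2H : Th2 (fun σ₁ σ₂ => (1 / (k₂ : ℂ)) * Th2 F σ₁ σ₂ + b₂ * F σ₁ σ₂) t₁ s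
      = ∑ m ∈ Finset.range N, ∑ n ∈ Finset.range N,
          ((n * k₂ : ℕ) : ℂ) * ((n : ℂ) + b₂) * T t₁ s m n := by
    show (s : ℂ) * (((1 / (k₂ : ℂ)) * Th2 F t₁ s + b₂ * F t₁ s)
        - ((1 / (k₂ : ℂ)) * Th2 F t₁ (s - 1) + b₂ * F t₁ (s - 1))) = _
    rw [hHsum t₁ s ht1N hs1 hsN, hHsum t₁ (s - 1) ht1N (by omega) hs1N]
    exact hW2 (fun n => (n : ℂ) + b₂) t₁ s hs1
  -- assemble the right-hand side bracket
  rw [hL, hTh1H, hTh2H, hHsum t₁ s ht1N hs1 hsN]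
  have hbr : (1 / (k₁ : ℂ)) * (∑ m ∈ Finset.range N, ∑ n ∈ Finset.range N,
        ((m * k₁ : ℕ) : ℂ) * ((n : ℂ) + b₂) * T t₁ s m n)
      + (1 / (k₂ : ℂ)) * (∑ m ∈ Finset.range N, ∑ n ∈ Finset.range N,
        ((n * k₂ : ℕ) : ℂ) * ((n : ℂ) + b₂) * T t₁ s m n)
      + a * (∑ m ∈ Finset.range N, ∑ n ∈ Finset.range N,
        ((n : ℂ) + b₂) * T t₁ s m n)
      = ∑ m ∈ Finset.range N, ∑ n ∈ Finset.range N,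
          ((m : ℂ) + (n : ℂ) + a) * ((n : ℂ) + b₂) * T t₁ s m n := by
    rw [Finset.mul_sum, Finset.mul_sum, Finset.mul_sum, ← Finset.sum_add_distrib,
      ← Finset.sum_add_distrib]
    refine Finset.sum_congr rfl fun m _ => ?_
    rw [Finset.mul_sum, Finset.mul_sum, Finset.mul_sum, ← Finset.sum_add_distrib,
      ← Finset.sum_add_distrib]
    refine Finset.sum_congr rfl fun n _ => ?_
    push_cast
    field_simp
  rw [hbr, Finset.mul_sum]
  refine Finset.sum_congr rfl fun m _ => ?_
  rw [Finset.mul_sum, hN]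
  rw [Finset.sum_range_succ', Finset.sum_range_succ]
  have h0 : (((0 : ℕ) * k₂ : ℕ) : ℂ) * (((0 : ℕ) : ℂ) + c₂ - 1) * T t₁ t₂ m 0 = 0 := by
    simp
  have hM : T t₁ s m (t₁ + t₂) = 0 := by
    have hlt : s < (t₁ + t₂) * k₂ := by
      have : t₁ + t₂ ≤ (t₁ + t₂) * k₂ := Nat.le_mul_of_pos_right _ hk₂
      omega
    rw [hT]
    simp [Tm, poch_nat_zero hlt]
  rw [hM]
  simp only [Nat.cast_zero, zero_mul, Nat.cast_ofNat, mul_zero, add_zero, Nat.zero_mul]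
  refine Finset.sum_congr rfl fun n _ => ?_
  have key := Tm_shift a b₁ b₂ c₁ c₂ x y k₁ k₂ hk₂ hc₁ hc₂ t₁ t₂ m n (by omega)
  rw [← hs, ← hT] at key
  linear_combination key
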